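/- Let N ≥ 2 and let f₁, …, f_N : [0,1] → [0,1] be strictly monotone contractions (Lipschitz with constant < 1) with f_n((0,1)) ∩ f_m((0,1)) = ∅ for all n ≠ m, forming an iterated function system whose attractor A_* = ⋂_{m∈ℕ} A_m (where A₀ = [0,1] and A_m = ⋃_{n=1}^N f_n(A_{m−1})) has Lebesgue measure zero. Define P₀ : L¹([0,1]) → L¹([0,1]) by P₀f = ∑_{n=1}^N |f_n′|·(f∘f_n). Then for every nonnegative f ∈ L¹([0,1]) the sequence (P₀ᵐf)_{m∈ℕ} converges to 0 in L¹([0,1]). -/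

import Mathlib

open MeasureTheory Filter Topology
open scoped ENNReal NNReal

/-- Let `N ≥ 2` and let `f₁, …, f_N : [0,1] → [0,1]` be strictly monotone
contractions (Lipschitz with constant `< 1`) with `f_n((0,1)) ∩ f_m((0,1)) = ∅` for
`n ≠ m`, forming an iterated function system whose attractor `A_* = ⋂ₘ A_m` (where
`A₀ = [0,1]`, `A_m = ⋃ₙ f_n(A_{m−1})`) has Lebesgue measure zero. Define
`P₀ f = ∑ₙ |f_n′| (f ∘ f_n)` with `f_n′` the a.e. derivatives. Then for every nonnegative
`f ∈ L¹([0,1])`, the sequence `(P₀ᵐ f)ₘ` converges to `0` in `L¹([0,1])`. -/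
theorem stmt15 (N : ℕ) (hN : 2 ≤ N) (f : Fin N → ℝ → ℝ)
    (hmaps : ∀ n, Set.MapsTo (f n) (Set.Icc 0 1) (Set.Icc 0 1))
    (hmono : ∀ n, StrictMonoOn (f n) (Set.Icc 0 1) ∨ StrictAntiOn (f n) (Set.Icc 0 1))
    (hlip : ∀ n, ∃ K : NNReal, K < 1 ∧ LipschitzOnWith K (f n) (Set.Icc 0 1))
    (hdisj : ∀ n m, n ≠ m →
      Disjoint (f n '' Set.Ioo 0 1) (f m '' Set.Ioo 0 1))
    (f' : Fin N → ℝ → ℝ)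
    (hf' : ∀ n, ∀ᵐ x ∂(volume.restrict (Set.Icc (0 : ℝ) 1)),
      HasDerivWithinAt (f n) (f' n x) (Set.Icc 0 1) x)
    (P₀ : (ℝ → ℝ) → (ℝ → ℝ))
    (hP₀ : ∀ F : ℝ → ℝ, ∀ x : ℝ, P₀ F x = ∑ n, |f' n x| * F (f n x))
    (A : ℕ → Set ℝ) (hA0 : A 0 = Set.Icc 0 1)
    (hAsucc : ∀ m : ℕ, A (m + 1) = ⋃ n, f n '' A m)
    (hattr : volume (⋂ m, A m) = 0) :
    ∀ F : ℝ → ℝ, Integrable F (volume.restrict (Set.Icc 0 1)) → (∀ x, 0 ≤ F x) →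
      Tendsto (fun m : ℕ => ∫ x in Set.Icc (0 : ℝ) 1, |(P₀^[m]) F x|) atTop (𝓝 0) := by
  intro F hFint hFpos
  have hIm : MeasurableSet (Set.Icc (0:ℝ) 1) := measurableSet_Icc
  have hinj : ∀ n, Set.InjOn (f n) (Set.Icc (0:ℝ) 1) := fun n =>
    (hmono n).elim (fun h => h.injOn) (fun h => h.injOn)
  have hcont : ∀ n, ContinuousOn (f n) (Set.Icc (0:ℝ) 1) := fun n =>
    ((hlip n).choose_spec.2).continuousOn
  -- the good set S
  have hae : ∀ᵐ x ∂(volume.restrict (Set.Icc (0:ℝ) 1)),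
      ∀ n, HasDerivWithinAt (f n) (f' n x) (Set.Icc 0 1) x := ae_all_iff.2 hf'
  set B : Set ℝ := {x | ¬ ∀ n, HasDerivWithinAt (f n) (f' n x) (Set.Icc 0 1) x} with hBdef
  set T : Set ℝ := toMeasurable (volume.restrict (Set.Icc (0:ℝ) 1)) B with hTdef
  have hTsub : B ⊆ T := subset_toMeasurable _ _
  have hTm : MeasurableSet T := measurableSet_toMeasurable _ _
  have hTnull : (volume.restrict (Set.Icc (0:ℝ) 1)) T = 0 := by
    rw [hTdef, measure_toMeasurable]
    exact hae
  set S : Set ℝ := Set.Ioo 0 1 \ T with hSdef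
  have hSm : MeasurableSet S := measurableSet_Ioo.diff hTm
  have hSIoo : S ⊆ Set.Ioo 0 1 := Set.diff_subset
  have hSI : S ⊆ Set.Icc (0:ℝ) 1 := hSIoo.trans Set.Ioo_subset_Icc_self
  have hSderiv : ∀ x ∈ S, ∀ n, HasDerivWithinAt (f n) (f' n x) (Set.Icc 0 1) x := by
    intro x hx
    by_contra h
    exact hx.2 (hTsub h)
  have hISnull : volume (Set.Icc (0:ℝ) 1 \ S) = 0 := by
    have h1 : Set.Icc (0:ℝ) 1 \ S ⊆ ({0,1} : Set ℝ) ∪ (T ∩ Set.Icc (0:ℝ) 1) := by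
      intro x hx
      rcases hx with ⟨hxI, hxS⟩
      by_cases hio : x ∈ Set.Ioo (0:ℝ) 1
      · right
        refine ⟨?_, hxI⟩
        by_contra hxT
        exact hxS ⟨hio, hxT⟩
      · left
        rcases hxI with ⟨h0, h1⟩
        rcases lt_or_eq_of_le h0 with h0' | h0'
        · rcases lt_or_eq_of_le h1 with h1' | h1'
          · exact absurd ⟨h0', h1'⟩ hio
          · right; exact h1'.symm ▸ rfl
        · left; exact h0'.symm ▸ rfl
    refine measure_mono_null h1 ?_
    refine le_antisymm ((measure_union_le _ _).trans ?_) zero_le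
    have h2 : volume ({0,1} : Set ℝ) = 0 := (Set.toFinite ({0,1}:Set ℝ)).measure_zero _
    have h3 : volume (T ∩ Set.Icc (0:ℝ) 1) = 0 := by
      rw [← Measure.restrict_apply' hIm]
      exact hTnull
    rw [h2, h3, add_zero]
  have hrSI : volume.restrict (Set.Icc (0:ℝ) 1) = volume.restrict S := by
    conv_lhs => rw [← Set.union_diff_cancel hSI]
    rw [Measure.restrict_union Set.disjoint_sdiff_right (hIm.diff hSm),
      Measure.restrict_eq_zero.2 hISnull, add_zero]
  -- change of variables
  have cov : ∀ (n : Fin N) (U : Set ℝ), MeasurableSet U → U ⊆ S → ∀ g : ℝ → ℝ≥0∞,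
      ∫⁻ y in f n '' U, g y = ∫⁻ x in U, ENNReal.ofReal |f' n x| * g (f n x) := by
    intro n U hUm hUS g
    have h1 : ∀ x ∈ U, HasDerivWithinAt (f n) (f' n x) U x := fun x hx =>
      (hSderiv x (hUS hx) n).mono (hUS.trans hSI)
    have := lintegral_image_eq_lintegral_abs_det_fderiv_mul volume hUm
      (fun x hx => (h1 x hx).hasFDerivWithinAt) ((hinj n).mono (hUS.trans hSI)) g
    simpa [ContinuousLinearMap.det_toSpanSingleton] using this
  -- images are measurable
  have himg : ∀ (n : Fin N) (U : Set ℝ), MeasurableSet U → U ⊆ Set.Icc (0:ℝ) 1 →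
      MeasurableSet (f n '' U) := fun n U hUm hUI =>
    hUm.image_of_continuousOn_injOn ((hcont n).mono hUI) ((hinj n).mono hUI)
  -- properties of A
  have hAI : ∀ m, A m ⊆ Set.Icc (0:ℝ) 1 := by
    intro m
    induction m with
    | zero => rw [hA0]
    | succ m ih =>
      rw [hAsucc]
      exact Set.iUnion_subset fun n => (Set.image_mono ih).trans (hmaps n).image_subset
  have hAm : ∀ m, MeasurableSet (A m) := by
    intro m
    induction m with
    | zero => rw [hA0]; exact hIm
    | succ m ih =>
      rw [hAsucc]
      exact MeasurableSet.iUnion fun n => himg n (A m) ih (hAI m)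
  have hAsub : ∀ m, A (m+1) ⊆ A m := by
    intro m
    induction m with
    | zero =>
      rw [hAsucc, hA0]
      exact Set.iUnion_subset fun n => (hmaps n).image_subset
    | succ m ih =>
      rw [hAsucc (m+1)]
      refine Set.iUnion_subset fun n => ?_
      calc f n '' A (m+1) ⊆ f n '' A m := Set.image_mono ih
        _ ⊆ A (m+1) := by rw [hAsucc m]; exact Set.subset_iUnion (fun k => f k '' A m) n
  have hAanti : Antitone A := antitone_nat_of_succ_le hAsub
  -- nonnegativity of iterates
  have hiter_nonneg : ∀ m x, 0 ≤ P₀^[m] F x := by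
    intro m
    induction m with
    | zero => simpa using hFpos
    | succ m ih =>
      intro x
      rw [Function.iterate_succ_apply', hP₀]
      exact Finset.sum_nonneg fun n _ => mul_nonneg (abs_nonneg _) (ih _)
  -- a.e. measurability of the derivatives
  have hderivmeas : ∀ n, AEMeasurable (fun x => f' n x) (volume.restrict S) := by
    intro n
    have h1 : ∀ x ∈ S, HasFDerivWithinAt (f n)
        ((1 : ℝ →L[ℝ] ℝ).smulRight (f' n x)) S x :=
      fun x hx => ((hSderiv x hx n).mono hSI).hasFDerivWithinAt
    have h2 := aemeasurable_fderivWithin volume hSm h1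
    have h3 : Continuous fun L : ℝ →L[ℝ] ℝ => L 1 :=
      (ContinuousLinearMap.apply ℝ ℝ (1:ℝ)).continuous
    have h4 := h3.measurable.comp_aemeasurable h2
    exact h4.congr (Filter.Eventually.of_forall fun x => by
      simp [Function.comp, ContinuousLinearMap.smulRight_apply])
  have hfmeas : ∀ n, AEMeasurable (f n) (volume.restrict S) := fun n =>
    ((hcont n).mono hSI).aemeasurable hSm
  -- product measurability lemma
  have hprod : ∀ (n : Fin N) (G : ℝ → ℝ),
      AEMeasurable G (volume.restrict (Set.Icc (0:ℝ) 1)) →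
      AEMeasurable (fun x => |f' n x| * G (f n x)) (volume.restrict (Set.Icc (0:ℝ) 1)) := by
    intro n G hG
    obtain ⟨G₀, hG₀m, hGG₀⟩ := hG
    set E : Set ℝ := toMeasurable volume ({x | G x ≠ G₀ x} ∩ Set.Icc (0:ℝ) 1) with hEdef
    have hEm : MeasurableSet E := measurableSet_toMeasurable _ _
    have hEnull : volume E = 0 := by
      rw [hEdef, measure_toMeasurable, ← Measure.restrict_apply' hIm]
      exact hGG₀
    have hEsub : {x | G x ≠ G₀ x} ∩ Set.Icc (0:ℝ) 1 ⊆ E := subset_toMeasurable _ _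
    have hmeas2 : AEMeasurable (fun x => |f' n x| * G₀ (f n x))
        (volume.restrict (Set.Icc (0:ℝ) 1)) := by
      rw [hrSI]
      exact (continuous_abs.measurable.comp_aemeasurable (hderivmeas n)).mul
        (hG₀m.comp_aemeasurable (hfmeas n))
    have hφ : ∀ᵐ x ∂(volume.restrict S), ¬(f' n x ≠ 0 ∧ f n x ∈ E) := by
      set φ : ℝ → ℝ≥0∞ := fun x =>
        ENNReal.ofReal |f' n x| * (E.indicator (fun _ => (1:ℝ≥0∞)) (f n x)) with hφdef
      have hφmeas : AEMeasurable φ (volume.restrict S) := by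
        refine AEMeasurable.mul ?_ ?_
        · exact ENNReal.measurable_ofReal.comp_aemeasurable
            (continuous_abs.measurable.comp_aemeasurable (hderivmeas n))
        · exact (measurable_const.indicator hEm).comp_aemeasurable (hfmeas n)
      have hφ0 : ∫⁻ x in S, φ x = 0 := by
        have h : ∫⁻ x in S, φ x = ∫⁻ y in f n '' S, E.indicator (fun _ => (1:ℝ≥0∞)) y := by
          rw [cov n S hSm subset_rfl (E.indicator fun _ => (1:ℝ≥0∞))]
        rw [h, lintegral_indicator hEm, setLIntegral_one, Measure.restrict_apply hEm]
        exact le_antisymm ((measure_mono Set.inter_subset_left).trans hEnull.le) zero_le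
      have h0 := (lintegral_eq_zero_iff' hφmeas).1 hφ0
      filter_upwards [h0] with x hx
      rintro ⟨h1, h2⟩
      rw [hφdef] at hx
      simp only [Set.indicator_of_mem h2, mul_one, Pi.zero_apply] at hx
      rw [ENNReal.ofReal_eq_zero] at hx
      exact h1 (abs_nonneg (f' n x) |>.antisymm hx |> abs_eq_zero.1 ∘ Eq.symm)
    have hae2 : (fun x => |f' n x| * G (f n x)) =ᵐ[volume.restrict (Set.Icc (0:ℝ) 1)]
        (fun x => |f' n x| * G₀ (f n x)) := by
      rw [hrSI]
      filter_upwards [hφ, ae_restrict_mem hSm] with x hx hxS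
      by_cases h0 : f' n x = 0
      · simp [h0]
      · have h2 : f n x ∉ E := fun hmem => hx ⟨h0, hmem⟩
        have h3 : G (f n x) = G₀ (f n x) := by
          by_contra hne
          exact h2 (hEsub ⟨hne, (hmaps n) (hSI hxS)⟩)
        rw [h3]
    exact hmeas2.congr hae2.symm
  -- a.e. measurability of the iterates
  have hmeasiter : ∀ m, AEMeasurable (P₀^[m] F) (volume.restrict (Set.Icc (0:ℝ) 1)) := by
    intro m
    induction m with
    | zero => simpa using hFint.aestronglyMeasurable.aemeasurable
    | succ m ih =>
      have heq : P₀^[m+1] F = fun x => ∑ n, |f' n x| * (P₀^[m] F) (f n x) := by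
        funext x
        rw [Function.iterate_succ_apply', hP₀]
      rw [heq]
      exact Finset.aemeasurable_fun_sum _ fun n _ => hprod n _ ih
  -- one-step identity
  have step : ∀ (m : ℕ) (U : Set ℝ), MeasurableSet U → U ⊆ S →
      ∫⁻ x in U, ENNReal.ofReal (P₀^[m+1] F x) =
        ∫⁻ y in ⋃ n, f n '' U, ENNReal.ofReal (P₀^[m] F y) := by
    intro m U hUm hUS
    have hGnn : ∀ x, 0 ≤ P₀^[m] F x := hiter_nonneg m
    have e1 : ∀ x, ENNReal.ofReal (P₀^[m+1] F x) =
        ∑ n, ENNReal.ofReal |f' n x| * ENNReal.ofReal ((P₀^[m] F) (f n x)) := by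
      intro x
      rw [Function.iterate_succ_apply', hP₀,
        ENNReal.ofReal_sum_of_nonneg (fun n _ => mul_nonneg (abs_nonneg _) (hGnn _))]
      exact Finset.sum_congr rfl fun n _ => ENNReal.ofReal_mul (abs_nonneg _)
    have hdisj' : Pairwise (Function.onFun Disjoint fun n => f n '' U) := by
      intro n m' hnm
      exact (hdisj n m' hnm).mono (Set.image_mono (hUS.trans hSIoo))
        (Set.image_mono (hUS.trans hSIoo))
    have hmeas' : ∀ n, MeasurableSet (f n '' U) := fun n => himg n U hUm (hUS.trans hSI)
    calc ∫⁻ x in U, ENNReal.ofReal (P₀^[m+1] F x)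
        = ∫⁻ x in U, ∑ n, ENNReal.ofReal |f' n x| * ENNReal.ofReal ((P₀^[m] F) (f n x)) :=
          lintegral_congr e1
      _ = ∑ n, ∫⁻ x in U, ENNReal.ofReal |f' n x| * ENNReal.ofReal ((P₀^[m] F) (f n x)) := by
          refine lintegral_finset_sum' _ fun n _ => ?_
          have h1 := hprod n (P₀^[m] F) (hmeasiter m)
          have h2 : AEMeasurable (fun x => |f' n x| * (P₀^[m] F) (f n x))
              (volume.restrict U) := by
            have hr : volume.restrict U = (volume.restrict (Set.Icc (0:ℝ) 1)).restrict U := by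
              rw [Measure.restrict_restrict hUm, Set.inter_eq_left.2 (hUS.trans hSI)]
            rw [hr]
            exact h1.restrict
          have h3 : (fun x => ENNReal.ofReal |f' n x| * ENNReal.ofReal ((P₀^[m] F) (f n x)))
              = fun x => ENNReal.ofReal (|f' n x| * (P₀^[m] F) (f n x)) :=
            funext fun x => (ENNReal.ofReal_mul (abs_nonneg _)).symm
          rw [h3]
          exact ENNReal.measurable_ofReal.comp_aemeasurable h2
      _ = ∑ n, ∫⁻ y in f n '' U, ENNReal.ofReal (P₀^[m] F y) :=
          Finset.sum_congr rfl fun n _ =>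
            (cov n U hUm hUS (fun y => ENNReal.ofReal (P₀^[m] F y))).symm
      _ = ∫⁻ y in ⋃ n, f n '' U, ENNReal.ofReal (P₀^[m] F y) := by
          rw [Measure.restrict_iUnion hdisj' hmeas', lintegral_sum_measure, tsum_fintype]
  -- main inductive claim
  have claim : ∀ (m k : ℕ), ∫⁻ x in A k ∩ S, ENNReal.ofReal (P₀^[m] F x) ≤
      ∫⁻ x in A (k + m), ENNReal.ofReal (F x) := by
    intro m
    induction m with
    | zero =>
      intro k
      simpa using lintegral_mono' (Measure.restrict_mono Set.inter_subset_left le_rfl) le_rfl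
    | succ m ih =>
      intro k
      have hUm : MeasurableSet (A k ∩ S) := (hAm k).inter hSm
      have hUS : A k ∩ S ⊆ S := Set.inter_subset_right
      rw [step m _ hUm hUS]
      have hU : (⋃ n, f n '' (A k ∩ S)) ⊆ A (k+1) := by
        rw [hAsucc]
        exact Set.iUnion_mono fun n => Set.image_mono Set.inter_subset_left
      have hsplit : A (k+1) = (A (k+1) ∩ S) ∪ (A (k+1) \ S) :=
        (Set.inter_union_diff _ _).symm
      calc ∫⁻ y in ⋃ n, f n '' (A k ∩ S), ENNReal.ofReal (P₀^[m] F y)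
          ≤ ∫⁻ y in (A (k+1) ∩ S) ∪ (A (k+1) \ S), ENNReal.ofReal (P₀^[m] F y) :=
            lintegral_mono' (Measure.restrict_mono (hsplit ▸ hU) le_rfl) le_rfl
        _ ≤ ∫⁻ y, ENNReal.ofReal (P₀^[m] F y)
              ∂(volume.restrict (A (k+1) ∩ S) + volume.restrict (A (k+1) \ S)) :=
            lintegral_mono' (Measure.restrict_union_le _ _) le_rfl
        _ = (∫⁻ y in A (k+1) ∩ S, ENNReal.ofReal (P₀^[m] F y)) +
              ∫⁻ y in A (k+1) \ S, ENNReal.ofReal (P₀^[m] F y) :=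
            lintegral_add_measure _ _ _
        _ = ∫⁻ y in A (k+1) ∩ S, ENNReal.ofReal (P₀^[m] F y) := by
            have hz : volume (A (k+1) \ S) = 0 :=
              measure_mono_null (Set.diff_subset_diff_left (hAI (k+1))) hISnull
            rw [Measure.restrict_eq_zero.2 hz]
            simp
        _ ≤ ∫⁻ x in A ((k+1) + m), ENNReal.ofReal (F x) := ih (k+1)
        _ = ∫⁻ x in A (k + (m+1)), ENNReal.ofReal (F x) := by
            rw [show (k+1) + m = k + (m+1) from by omega]
  -- measurable version of F and the density measure
  set F₀ : ℝ → ℝ := hFint.aestronglyMeasurable.mk F with hF₀def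
  have hF₀m : Measurable F₀ := hFint.aestronglyMeasurable.stronglyMeasurable_mk.measurable
  have hFF₀ : F =ᵐ[volume.restrict (Set.Icc (0:ℝ) 1)] F₀ := hFint.aestronglyMeasurable.ae_eq_mk
  set ν : Measure ℝ := volume.withDensity (fun x => ENNReal.ofReal (F₀ x)) with hνdef
  have hνA : ∀ m, (∫⁻ x in A m, ENNReal.ofReal (F x)) = ν (A m) := by
    intro m
    rw [hνdef, withDensity_apply _ (hAm m)]
    refine lintegral_congr_ae ?_
    have h1 : F =ᵐ[volume.restrict (A m)] F₀ :=
      ae_restrict_of_ae_restrict_of_subset (hAI m) hFF₀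
    filter_upwards [h1] with x hx
    rw [hx]
  have hνI : ν (Set.Icc (0:ℝ) 1) ≠ ⊤ := by
    rw [hνdef, withDensity_apply _ hIm]
    have h1 : ∫⁻ x in Set.Icc (0:ℝ) 1, ENNReal.ofReal (F₀ x) =
        ∫⁻ x in Set.Icc (0:ℝ) 1, ENNReal.ofReal (F x) :=
      lintegral_congr_ae (by filter_upwards [hFF₀] with x hx; rw [hx])
    rw [h1]
    have h2 : ∫⁻ x in Set.Icc (0:ℝ) 1, ENNReal.ofReal (F x) ≤
        ∫⁻ x in Set.Icc (0:ℝ) 1, (‖F x‖₊ : ℝ≥0∞) :=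
      lintegral_mono fun x => Real.ofReal_le_enorm (F x)
    exact (h2.trans_lt hFint.hasFiniteIntegral).ne
  have hνAfin : ∀ m, ν (A m) ≠ ⊤ := fun m =>
    ne_top_of_le_ne_top hνI (measure_mono (hAI m))
  have htend : Tendsto (fun m => ν (A m)) atTop (𝓝 0) := by
    have h1 := tendsto_measure_iInter_atTop (μ := ν)
      (fun m => (hAm m).nullMeasurableSet) hAanti ⟨0, hνAfin 0⟩
    have h2 : ν (⋂ m, A m) = 0 := by
      rw [hνdef, withDensity_apply _ (MeasurableSet.iInter fun m => hAm m)]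
      exact setLIntegral_measure_zero _ _ hattr
    rw [h2] at h1
    exact h1
  -- the bound
  have hbound : ∀ m, ∫ x in Set.Icc (0:ℝ) 1, |(P₀^[m]) F x| ≤ (ν (A m)).toReal := by
    intro m
    have h1 : ∫ x in Set.Icc (0:ℝ) 1, |(P₀^[m]) F x| = ∫ x in Set.Icc (0:ℝ) 1, P₀^[m] F x :=
      integral_congr_ae (Filter.Eventually.of_forall fun x => abs_of_nonneg (hiter_nonneg m x))
    have h2 : ∫ x in Set.Icc (0:ℝ) 1, P₀^[m] F x =
        (∫⁻ x in Set.Icc (0:ℝ) 1, ENNReal.ofReal (P₀^[m] F x)).toReal :=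
      integral_eq_lintegral_of_nonneg_ae (Filter.Eventually.of_forall (hiter_nonneg m))
        (aestronglyMeasurable_iff_aemeasurable.2 (hmeasiter m))
    have h3 : ∫⁻ x in Set.Icc (0:ℝ) 1, ENNReal.ofReal (P₀^[m] F x) ≤ ν (A m) := by
      rw [hrSI]
      have hS0 : A 0 ∩ S = S := by
        rw [hA0]
        exact Set.inter_eq_self_of_subset_right hSI
      calc ∫⁻ x in S, ENNReal.ofReal (P₀^[m] F x)
          = ∫⁻ x in A 0 ∩ S, ENNReal.ofReal (P₀^[m] F x) := by rw [hS0]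
        _ ≤ ∫⁻ x in A (0 + m), ENNReal.ofReal (F x) := claim m 0
        _ = ν (A m) := by rw [Nat.zero_add]; exact hνA m
    rw [h1, h2]
    exact ENNReal.toReal_mono (hνAfin m) h3
  have hnn : ∀ m, 0 ≤ ∫ x in Set.Icc (0:ℝ) 1, |(P₀^[m]) F x| :=
    fun m => integral_nonneg fun x => abs_nonneg _
  have htend' : Tendsto (fun m => (ν (A m)).toReal) atTop (𝓝 0) := by
    have := (ENNReal.tendsto_toReal (a := 0) (by simp)).comp htend
    simpa [Function.comp_def] using this
  exact squeeze_zero hnn hbound htend'
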